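/- Let 0 < p₀ < ln 2. The unique invariant probability measure of the linear system dB⁰/dt = ∑_n 2^{-n}p₀Bⁿe^{-p₀} - p₀B⁰, dBⁿ/dt = 2^{1-n}p₀B^{n-1}(1-e^{-p₀}) - 2^{-n}p₀Bⁿ (n ≥ 1) is given by Bⁿ_st = (2(1 - e^{-p₀}))ⁿ·B⁰_st with B⁰_st = (1 - 2(1 - e^{-p₀})) = 2e^{-p₀} - 1 > 0, and ∑_n Bⁿ_st = 1. -/

import Mathlib

open Real

/-- `B` is an invariant point of the linear dominating back-off system. -/
def LinearSystemInvariant (p₀ : ℝ) (B : ℕ → ℝ) : Prop :=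
  ((∑' n : ℕ, (2:ℝ)^(-(n:ℤ)) * p₀ * B n) * Real.exp (-p₀) = p₀ * B 0) ∧
  (∀ n : ℕ, 1 ≤ n →
    (2:ℝ)^((1:ℤ) - n) * p₀ * B (n-1) * (1 - Real.exp (-p₀)) = (2:ℝ)^(-(n:ℤ)) * p₀ * B n)

theorem linear_backoff_system_invariant_measure
    (p₀ : ℝ) (hp₀ : 0 < p₀) (hp₀' : p₀ < Real.log 2)
    (Bst : ℕ → ℝ)
    (hBst : ∀ n, Bst n = (2 * (1 - Real.exp (-p₀)))^n * (2 * Real.exp (-p₀) - 1)) :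
    (Bst 0 = 2 * Real.exp (-p₀) - 1 ∧ 0 < Bst 0 ∧
      Bst 0 = 1 - 2 * (1 - Real.exp (-p₀)) ∧
      HasSum Bst 1 ∧ LinearSystemInvariant p₀ Bst) ∧
    ∀ B : ℕ → ℝ, (∀ n, 0 ≤ B n) → HasSum B 1 → LinearSystemInvariant p₀ B → B = Bst := by
  set e := Real.exp (-p₀) with he
  have he1 : e < 1 := by
    rw [he, Real.exp_lt_one_iff]; linarith
  have he2 : (1:ℝ)/2 < e := by
    have : Real.exp (-Real.log 2) < Real.exp (-p₀) := Real.exp_lt_exp.mpr (by linarith)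
    rw [Real.exp_neg, Real.exp_log (by norm_num : (0:ℝ) < 2)] at this
    rw [he, one_div]; exact this
  set r : ℝ := 2 * (1 - e) with hr
  have hr0 : 0 < r := by rw [hr]; nlinarith
  have hr1 : r < 1 := by rw [hr]; nlinarith
  have hone : (1:ℝ) - r ≠ 0 := by linarith
  have hBst' : ∀ n, Bst n = r ^ n * (1 - r) := by
    intro n; rw [hBst n]; rw [hr]; ring
  have hB0 : Bst 0 = 1 - r := by rw [hBst' 0]; ring
  have hgeo : HasSum (fun n : ℕ => r ^ n) (1 - r)⁻¹ :=
    hasSum_geometric_of_lt_one hr0.le hr1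
  have hsum : HasSum Bst 1 := by
    have := hgeo.mul_right (1 - r)
    rw [inv_mul_cancel₀ hone] at this
    exact this.congr_fun fun n => (hBst' n).symm ▸ rfl
  have hzpow : ∀ n : ℕ, (2:ℝ) ^ (-(n:ℤ)) = ((2:ℝ) ^ n)⁻¹ := by
    intro n; rw [zpow_neg, zpow_natCast]
  -- invariance
  have hinv : LinearSystemInvariant p₀ Bst := by
    constructor
    · have hgeo2 : HasSum (fun n : ℕ => (r/2) ^ n) (1 - r/2)⁻¹ :=
        hasSum_geometric_of_lt_one (by positivity) (by linarith)
      have hkey : HasSum (fun n : ℕ => (2:ℝ)^(-(n:ℤ)) * p₀ * Bst n)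
          ((1 - r/2)⁻¹ * (p₀ * (1 - r))) := by
        refine (hgeo2.mul_right (p₀ * (1 - r))).congr_fun fun n => ?_
        rw [hBst' n, hzpow n, div_pow]
        field_simp
      rw [hkey.tsum_eq, hB0]
      have h2 : (1:ℝ) - r/2 = e := by rw [hr]; ring
      rw [h2]
      have heq : e ≠ 0 := by positivity
      field_simp
      exact he.symm
    · intro n hn
      obtain ⟨m, rfl⟩ : ∃ m, n = m + 1 := ⟨n - 1, (Nat.succ_pred_eq_of_pos hn).symm⟩
      have h1 : (2:ℝ) ^ ((1:ℤ) - (m+1:ℕ)) = (2:ℝ) ^ (-(m:ℤ)) := by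
        congr 1; push_cast; ring
      have h2 : (2:ℝ) ^ (-((m+1:ℕ):ℤ)) = (2:ℝ) ^ (-(m:ℤ)) * 2⁻¹ := by
        rw [show -((m+1:ℕ):ℤ) = -(m:ℤ) + (-1) by push_cast; ring,
          zpow_add₀ (by norm_num : (2:ℝ) ≠ 0)]
        norm_num
      simp only [Nat.add_sub_cancel, h1, h2]
      rw [hBst' m, hBst' (m+1), pow_succ]
      have : (1:ℝ) - e = r / 2 := by rw [hr]; ring
      rw [this]
      ring
  refine ⟨⟨by rw [hBst 0]; ring, by rw [hB0]; linarith, by rw [hB0, hr], hsum, hinv⟩, ?_⟩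
  intro B _ hBsum hBinv
  have hrec : ∀ n : ℕ, B (n+1) = r * B n := by
    intro n
    have h := hBinv.2 (n+1) (Nat.le_add_left 1 n)
    simp only [Nat.add_sub_cancel] at h
    have h1 : (2:ℝ) ^ ((1:ℤ) - (n+1:ℕ)) = (2:ℝ) ^ (-(n:ℤ)) := by
      congr 1; push_cast; ring
    have h2 : (2:ℝ) ^ (-((n+1:ℕ):ℤ)) = (2:ℝ) ^ (-(n:ℤ)) * 2⁻¹ := by
      rw [show -((n+1:ℕ):ℤ) = -(n:ℤ) + (-1) by push_cast; ring,
        zpow_add₀ (by norm_num : (2:ℝ) ≠ 0)]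
      norm_num
    rw [h1, h2] at h
    have hpow : (2:ℝ) ^ (-(n:ℤ)) ≠ 0 := zpow_ne_zero _ (by norm_num)
    have : (1:ℝ) - e = r / 2 := by rw [hr]; ring
    rw [this] at h
    field_simp at h
    nlinarith [hp₀.ne', h]
  have hBn : ∀ n, B n = r ^ n * B 0 := by
    intro n
    induction n with
    | zero => simp
    | succ m ih => rw [hrec m, ih, pow_succ]; ring
  have hBsum' : HasSum B ((1 - r)⁻¹ * B 0) :=
    (hgeo.mul_right (B 0)).congr_fun fun n => hBn n
  have hB0eq : B 0 = 1 - r := by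
    have h1 := hBsum.unique hBsum'
    field_simp at h1
    linarith
  funext n
  rw [hBn n, hB0eq, hBst' n]
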